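/- Iteration bound for the boosting construction of outcome-indistinguishable predictors: Let ε > 0, let T ∈ ℕ, and let p⁰, p¹, …, p^T be predictors with p⁰ i = 1/2 for all i, such that for every t < T there exists δ_t : X → ℝ with |δ_t i| ≤ 1 for all i, such that the quantity Δ_t = Σ_i μ i · (p* i − p^t i) · δ_t i satisfies |Δ_t| > ε, and p^{t+1} i = clamp_{[0,1]}(p^t i + (Δ_t/2) · δ_t i) for all i. Then T ≤ 4/(3ε²). -/
import Mathlib


open Finset

lemma clamp_sq_le (a y : ℝ) (ha0 : 0 ≤ a) (ha1 : a ≤ 1) :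
    (a - min 1 (max 0 y)) ^ 2 ≤ (a - y) ^ 2 := by
  rcases le_total y 0 with h | h
  · rw [max_eq_left h, min_eq_right zero_le_one]
    nlinarith
  · rw [max_eq_right h]
    rcases le_total y 1 with h1 | h1
    · rw [min_eq_right h1]
    · rw [min_eq_left h1]
      nlinarith

/-- Iteration bound for the boosting construction of outcome-indistinguishable predictors. -/
theorem stmt_12 {X : Type*} [Fintype X] [Nonempty X]
    (μ : X → ℝ) (hμ0 : ∀ i, 0 ≤ μ i) (hμ1 : ∑ i, μ i = 1)
    (pstar : X → ℝ) (hps : ∀ i, 0 ≤ pstar i ∧ pstar i ≤ 1)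
    (ε : ℝ) (hε : 0 < ε) (T : ℕ)
    (p : ℕ → X → ℝ) (δ : ℕ → X → ℝ)
    (hbounds : ∀ t ≤ T, ∀ i, 0 ≤ p t i ∧ p t i ≤ 1)
    (h0 : ∀ i, p 0 i = 1 / 2)
    (hδ : ∀ t < T, ∀ i, |δ t i| ≤ 1)
    (hΔ : ∀ t < T, ε < |∑ i, μ i * (pstar i - p t i) * δ t i|)
    (hupd : ∀ t < T, ∀ i,
      p (t + 1) i
        = min 1 (max 0 (p t i + (∑ i, μ i * (pstar i - p t i) * δ t i) / 2 * δ t i))) :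
    (T : ℝ) ≤ 4 / (3 * ε ^ 2) := by
  set Φ : ℕ → ℝ := fun t => ∑ i, μ i * (pstar i - p t i) ^ 2 with hΦ
  -- each step decreases the potential by at least 3/4 ε²
  have key : ∀ t < T, Φ (t + 1) ≤ Φ t - 3 / 4 * ε ^ 2 := by
    intro t ht
    set Δ : ℝ := ∑ i, μ i * (pstar i - p t i) * δ t i with hΔdef
    have step1 : Φ (t + 1) ≤ ∑ i, μ i * (pstar i - (p t i + Δ / 2 * δ t i)) ^ 2 := by
      apply Finset.sum_le_sum
      intro i _
      rw [hupd t ht i]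
      exact mul_le_mul_of_nonneg_left
        (clamp_sq_le _ _ (hps i).1 (hps i).2) (hμ0 i)
    have step2 : ∑ i, μ i * (pstar i - (p t i + Δ / 2 * δ t i)) ^ 2
        = Φ t - Δ * Δ + Δ ^ 2 / 4 * ∑ i, μ i * δ t i ^ 2 := by
      have expand : ∀ i : X, μ i * (pstar i - (p t i + Δ / 2 * δ t i)) ^ 2
          = μ i * (pstar i - p t i) ^ 2 - Δ * (μ i * (pstar i - p t i) * δ t i)
            + Δ ^ 2 / 4 * (μ i * δ t i ^ 2) := by
        intro i; ring
      rw [Finset.sum_congr rfl fun i _ => expand i, Finset.sum_add_distrib,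
        Finset.sum_sub_distrib, ← Finset.mul_sum, ← Finset.mul_sum, ← hΔdef]
    have step3 : ∑ i, μ i * δ t i ^ 2 ≤ 1 := by
      rw [← hμ1]
      apply Finset.sum_le_sum
      intro i _
      have h1 : |δ t i| ≤ 1 := hδ t ht i
      have h2 : δ t i ^ 2 ≤ 1 := by
        rw [← sq_abs]; nlinarith [abs_nonneg (δ t i)]
      nlinarith [hμ0 i]
    have hΔsq : ε ^ 2 < Δ ^ 2 := by
      have := hΔ t ht
      rw [← hΔdef] at this
      nlinarith [abs_nonneg Δ, sq_abs Δ]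
    have hΔ2 : 0 ≤ Δ ^ 2 := sq_nonneg Δ
    calc Φ (t + 1) ≤ Φ t - Δ * Δ + Δ ^ 2 / 4 * ∑ i, μ i * δ t i ^ 2 := by
          rw [← step2]; exact step1
      _ ≤ Φ t - Δ * Δ + Δ ^ 2 / 4 := by nlinarith
      _ ≤ Φ t - 3 / 4 * ε ^ 2 := by nlinarith
  -- iterate
  have iter : ∀ t ≤ T, Φ t ≤ Φ 0 - (t : ℝ) * (3 / 4 * ε ^ 2) := by
    intro t
    induction t with
    | zero => intro _; simp
    | succ n ih =>
      intro h
      have hn : n < T := h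
      have := key n hn
      have := ih (le_of_lt hn)
      push_cast
      linarith
  have hΦ0 : Φ 0 ≤ 1 / 4 := by
    have : Φ 0 = ∑ i, μ i * (pstar i - 1 / 2) ^ 2 := by
      apply Finset.sum_congr rfl
      intro i _
      rw [h0 i]
    rw [this]
    calc ∑ i, μ i * (pstar i - 1 / 2) ^ 2 ≤ ∑ i, μ i * (1 / 4) := by
          apply Finset.sum_le_sum
          intro i _
          obtain ⟨h1, h2⟩ := hps i
          exact mul_le_mul_of_nonneg_left (by nlinarith) (hμ0 i)
      _ = 1 / 4 := by rw [← Finset.sum_mul, hμ1]; ring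
  have hΦT : 0 ≤ Φ T := Finset.sum_nonneg fun i _ =>
    mul_nonneg (hμ0 i) (sq_nonneg _)
  have := iter T le_rfl
  have hfinal : (T : ℝ) * (3 / 4 * ε ^ 2) ≤ 1 / 4 := by linarith
  rw [le_div_iff₀ (by positivity)]
  nlinarith [hfinal]
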